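/- Let F be a field, 0 < r < n, and let M be an invertible n×n matrix over F. Index rows and columns by 1,…,n and write M in blocks M₁₁ = M[1..r, 1..n−r], M₁₂ = M[1..r, n−r+1..n], M₂₁ = M[r+1..n, 1..n−r], M₂₂ = M[r+1..n, n−r+1..n]. Suppose that the inverse N = M⁻¹ satisfies: (i) its top-right (n−r)×(n−r) block N[1..n−r, r+1..n] is zero, and (ii) its bottom-left r×r block Ñ₂₁ = N[n−r+1..n, 1..r] is upper triangular. Assume moreover that M₂₁ is invertible. Then the r×r matrix C(M) = M₁₂ − M₁₁·M₂₁⁻¹·M₂₂ is upper triangular; in fact C(M)·Ñ₂₁ = I, so C(M) is the inverse of the upper-triangular matrix Ñ₂₁. -/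

import Mathlib

open Matrix

noncomputable section

variable {F : Type*} [Field F] {n r : ℕ}

/-- The inclusion of the bottom `n - r` indices: `i ↦ r + i`. -/
def botIdx (n r : ℕ) (i : Fin (n - r)) : Fin n :=
  ⟨r + i.val, by have := i.isLt; omega⟩

/-- The inclusion of the last `r` indices: `j ↦ (n - r) + j` (needs `r ≤ n`). -/
def rightIdx {n r : ℕ} (h : r ≤ n) (j : Fin r) : Fin n :=
  ⟨n - r + j.val, by have := j.isLt; omega⟩

/-- `M₁₁ = M[1..r, 1..n−r]`. -/
def blk11 (h : r ≤ n) (M : Matrix (Fin n) (Fin n) F) : Matrix (Fin r) (Fin (n - r)) F :=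
  M.submatrix (Fin.castLE h) (Fin.castLE (Nat.sub_le n r))

/-- `M₁₂ = M[1..r, n−r+1..n]`. -/
def blk12 (h : r ≤ n) (M : Matrix (Fin n) (Fin n) F) : Matrix (Fin r) (Fin r) F :=
  M.submatrix (Fin.castLE h) (rightIdx h)

/-- `M₂₁ = M[r+1..n, 1..n−r]`. -/
def blk21 (M : Matrix (Fin n) (Fin n) F) : Matrix (Fin (n - r)) (Fin (n - r)) F :=
  M.submatrix (botIdx n r) (Fin.castLE (Nat.sub_le n r))

/-- `M₂₂ = M[r+1..n, n−r+1..n]`. -/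
def blk22 (h : r ≤ n) (M : Matrix (Fin n) (Fin n) F) : Matrix (Fin (n - r)) (Fin r) F :=
  M.submatrix (botIdx n r) (rightIdx h)

/-- `Ñ₂₁ = N[n−r+1..n, 1..r]`. -/
def blkTilde21 (h : r ≤ n) (N : Matrix (Fin n) (Fin n) F) : Matrix (Fin r) (Fin r) F :=
  N.submatrix (rightIdx h) (Fin.castLE h)

/-- Row-splitting equivalence: top `r` then bottom `n-r`. -/
def rowEquiv (h : r ≤ n) : Fin r ⊕ Fin (n - r) ≃ Fin n :=
  finSumFinEquiv.trans (finCongr (by omega))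

/-- Column-splitting equivalence: left `n-r` then right `r`. -/
def colEquiv (h : r ≤ n) : Fin (n - r) ⊕ Fin r ≃ Fin n :=
  finSumFinEquiv.trans (finCongr (by omega))

lemma rowEquiv_inl (h : r ≤ n) (i : Fin r) : rowEquiv h (Sum.inl i) = Fin.castLE h i := by
  simp [rowEquiv, Fin.ext_iff]

lemma rowEquiv_inr (h : r ≤ n) (i : Fin (n - r)) : rowEquiv h (Sum.inr i) = botIdx n r i := by
  simp [rowEquiv, botIdx, Fin.ext_iff]

lemma colEquiv_inl (h : r ≤ n) (i : Fin (n - r)) :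
    colEquiv h (Sum.inl i) = Fin.castLE (Nat.sub_le n r) i := by
  simp [colEquiv, Fin.ext_iff]

lemma colEquiv_inr (h : r ≤ n) (i : Fin r) : colEquiv h (Sum.inr i) = rightIdx h i := by
  simp [colEquiv, rightIdx, Fin.ext_iff]

/-- If `M` is invertible, the top-right `(n−r)×(n−r)` block of `N = M⁻¹` vanishes, the
bottom-left `r×r` block `Ñ₂₁` of `N` is upper triangular, and `M₂₁` is invertible, then
`C(M) = M₁₂ − M₁₁·M₂₁⁻¹·M₂₂` is upper triangular; in fact `C(M)·Ñ₂₁ = 1`. -/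
theorem schur_complement_upper_triangular
    (h0 : 0 < r) (hrn : r < n) (M : Matrix (Fin n) (Fin n) F) (hM : IsUnit M)
    (hN1 : ∀ i j : Fin n, (i : ℕ) < n - r → r ≤ (j : ℕ) → M⁻¹ i j = 0)
    (hN2 : ∀ i j : Fin r, (j : ℕ) < (i : ℕ) → blkTilde21 hrn.le M⁻¹ i j = 0)
    (hM21 : IsUnit (blk21 (r := r) M)) :
    let C : Matrix (Fin r) (Fin r) F :=
      blk12 hrn.le M - blk11 hrn.le M * (blk21 M : Matrix (Fin (n - r)) (Fin (n - r)) F)⁻¹ * blk22 hrn.le M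
    (∀ i j : Fin r, (j : ℕ) < (i : ℕ) → C i j = 0) ∧
    C * blkTilde21 hrn.le M⁻¹ = 1 := by
  intro C
  set h := hrn.le
  set N := M⁻¹ with hNdef
  set N11 : Matrix (Fin (n - r)) (Fin r) F := N.submatrix (Fin.castLE (Nat.sub_le n r)) (Fin.castLE h) with hN11
  set N21 := blkTilde21 h N with hN21
  set N22 : Matrix (Fin r) (Fin (n - r)) F := N.submatrix (rightIdx h) (botIdx n r) with hN22
  -- M' and N'
  have hMblk : M.submatrix (rowEquiv h) (colEquiv h)
      = fromBlocks (blk11 h M) (blk12 h M) (blk21 M) (blk22 h M) := by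
    ext i j
    cases i <;> cases j <;>
      simp [rowEquiv_inl, rowEquiv_inr, colEquiv_inl, colEquiv_inr,
        blk11, blk12, blk21, blk22, fromBlocks]
  have hNblk : N.submatrix (colEquiv h) (rowEquiv h)
      = fromBlocks N11 0 N21 N22 := by
    ext i j
    cases i with
    | inl i =>
      cases j with
      | inl j => simp [rowEquiv_inl, colEquiv_inl, hN11, fromBlocks]
      | inr j =>
        simp only [submatrix_apply, rowEquiv_inr, colEquiv_inl, fromBlocks,
          Matrix.of_apply, Sum.elim_inl, Sum.elim_inr, Matrix.zero_apply]
        exact hN1 _ _ (by simp [Fin.castLE]) (by simp [botIdx])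
    | inr i =>
      cases j <;>
        simp [rowEquiv_inl, rowEquiv_inr, colEquiv_inr, hN21, hN22, blkTilde21, fromBlocks]
  have hdet : IsUnit M.det := M.isUnit_iff_isUnit_det.mp hM
  have hMN : M * N = 1 := mul_nonsing_inv M hdet
  have hprod : (fromBlocks (blk11 h M) (blk12 h M) (blk21 M) (blk22 h M)) *
      (fromBlocks N11 0 N21 N22) = 1 := by
    rw [← hMblk, ← hNblk, submatrix_mul_equiv, hMN, submatrix_one_equiv]
  rw [fromBlocks_multiply, ← fromBlocks_one] at hprod
  have e11 : blk11 h M * N11 + blk12 h M * N21 = 1 := by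
    have h' := congrArg Matrix.toBlocks₁₁ hprod
    simp only [toBlocks_fromBlocks₁₁] at h'
    exact h'
  have e21 : blk21 (r := r) M * N11 + blk22 h M * N21 = 0 := by
    have h' := congrArg Matrix.toBlocks₂₁ hprod
    simp only [toBlocks_fromBlocks₂₁] at h'
    exact h'
  have hdet21 : IsUnit (blk21 (r := r) M).det := (isUnit_iff_isUnit_det _).mp hM21
  have hinv21 : (blk21 (r := r) M : Matrix (Fin (n - r)) (Fin (n - r)) F)⁻¹ * blk21 M = 1 := nonsing_inv_mul _ hdet21
  have hN11eq : N11 = -((blk21 (r := r) M : Matrix (Fin (n - r)) (Fin (n - r)) F)⁻¹ * (blk22 h M * N21)) := by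
    have := congrArg (fun X : Matrix (Fin (n - r)) (Fin r) F => (blk21 (r := r) M : Matrix (Fin (n - r)) (Fin (n - r)) F)⁻¹ * X) e21
    simp only [Matrix.mul_add, ← Matrix.mul_assoc, hinv21, Matrix.one_mul, Matrix.mul_zero] at this
    rw [eq_neg_of_add_eq_zero_left this, Matrix.mul_assoc]
  have key : C * N21 = 1 := by
    have : C * N21 = blk12 h M * N21 + blk11 h M * N11 := by
      rw [hN11eq]
      simp only [C, sub_eq_add_neg, Matrix.add_mul, Matrix.neg_mul, Matrix.mul_neg, Matrix.mul_assoc]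
    rw [this, add_comm, e11]
  refine ⟨?_, key⟩
  -- N21 is upper triangular and invertible; C is its inverse
  have hdetN21 : IsUnit N21.det := by
    have := congrArg Matrix.det key
    rw [det_mul, det_one] at this
    exact IsUnit.of_mul_eq_one _ (mul_comm (C.det) _ ▸ this)
  have hCeq : C = N21⁻¹ := inv_eq_left_inv key ▸ rfl
  have hBT : N21.BlockTriangular id := fun i j hij => hN2 i j hij
  haveI : Invertible N21 := N21.invertibleOfIsUnitDet hdetN21
  have hBTinv : N21⁻¹.BlockTriangular id := blockTriangular_inv_of_blockTriangular hBT
  intro i j hij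
  rw [show C = N21⁻¹ from inv_eq_left_inv key ▸ rfl]
  exact hBTinv (show (id j : Fin r) < id i from hij)
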